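/- (Theorem 6.6) Let ξ = exp(iπ/5) ∈ ℂ. If (n₀, …, n₉) ∈ ℕ¹⁰ satisfies Σ_{j=0}^{9} n_j ≥ 3 and Σ_{j=0}^{9} n_j ξ^j ∈ ℝ, then there exists (m₀, …, m₉) ∈ ℕ¹⁰ with m_j ≤ n_j for all j, 0 < Σ_j m_j < Σ_j n_j, and Σ_{j=0}^{9} m_j ξ^j ∈ ℝ. That is, there is no nontrivial real combination of 10th roots of unity on any level n ≥ 3. -/

import Mathlib

noncomputable def xi : ℂ := Complex.exp (Real.pi * Complex.I / 5)

open Real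

lemma sum_univ_ten' {β : Type*} [AddCommMonoid β] (f : Fin 10 → β) :
    ∑ i, f i = f 0 + f 1 + f 2 + f 3 + f 4 + f 5 + f 6 + f 7 + f 8 + f 9 := by
  rw [Fin.sum_univ_castSucc, Fin.sum_univ_castSucc, Fin.sum_univ_eight]
  rfl

lemma xi_pow_im (j : ℕ) : (xi ^ j).im = Real.sin (j * Real.pi / 5) := by
  unfold xi
  rw [← Complex.exp_nat_mul]
  have h : (j : ℂ) * (Real.pi * Complex.I / 5) = ((j * Real.pi / 5 : ℝ) : ℂ) * Complex.I := by
    push_cast; ring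
  rw [h, Complex.exp_ofReal_mul_I_im]

lemma im_eq (m : Fin 10 → ℕ) :
    (∑ j, (m j : ℂ) * xi ^ (j : ℕ)).im =
      ((m 1 : ℝ) + m 4 - m 6 - m 9) * Real.sin (Real.pi / 5)
        + ((m 2 : ℝ) + m 3 - m 7 - m 8) * Real.sin (2 * Real.pi / 5) := by
  rw [Complex.im_sum, sum_univ_ten']
  simp only [Complex.mul_im, Complex.natCast_re, Complex.natCast_im, zero_mul, add_zero,
    xi_pow_im]
  norm_num
  push_cast
  have e0 : Real.sin ((0 : ℝ) * Real.pi / 5) = 0 := by norm_num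
  have e1 : (1 : ℝ) * Real.pi / 5 = Real.pi / 5 := by ring
  have e3 : Real.sin ((3 : ℝ) * Real.pi / 5) = Real.sin (2 * Real.pi / 5) := by
    rw [show (3 : ℝ) * Real.pi / 5 = Real.pi - 2 * Real.pi / 5 by ring, Real.sin_pi_sub]
  have e4 : Real.sin ((4 : ℝ) * Real.pi / 5) = Real.sin (Real.pi / 5) := by
    rw [show (4 : ℝ) * Real.pi / 5 = Real.pi - Real.pi / 5 by ring, Real.sin_pi_sub]
  have e5 : Real.sin ((5 : ℝ) * Real.pi / 5) = 0 := by
    rw [show (5 : ℝ) * Real.pi / 5 = Real.pi by ring, Real.sin_pi]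
  have e6 : Real.sin ((6 : ℝ) * Real.pi / 5) = -Real.sin (Real.pi / 5) := by
    rw [show (6 : ℝ) * Real.pi / 5 = Real.pi / 5 + Real.pi by ring, Real.sin_add_pi]
  have e7 : Real.sin ((7 : ℝ) * Real.pi / 5) = -Real.sin (2 * Real.pi / 5) := by
    rw [show (7 : ℝ) * Real.pi / 5 = 2 * Real.pi / 5 + Real.pi by ring, Real.sin_add_pi]
  have e8 : Real.sin ((8 : ℝ) * Real.pi / 5) = -Real.sin (2 * Real.pi / 5) := by
    rw [show (8 : ℝ) * Real.pi / 5 = 3 * Real.pi / 5 + Real.pi by ring, Real.sin_add_pi,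
      show (3 : ℝ) * Real.pi / 5 = Real.pi - 2 * Real.pi / 5 by ring, Real.sin_pi_sub]
  have e9 : Real.sin ((9 : ℝ) * Real.pi / 5) = -Real.sin (Real.pi / 5) := by
    rw [show (9 : ℝ) * Real.pi / 5 = 4 * Real.pi / 5 + Real.pi by ring, Real.sin_add_pi,
      show (4 : ℝ) * Real.pi / 5 = Real.pi - Real.pi / 5 by ring, Real.sin_pi_sub]
  rw [e3, e4, e6, e7, e8, e9]
  ring

lemma lin_indep (A B : ℤ)
    (h : (A : ℝ) * Real.sin (Real.pi / 5) + (B : ℝ) * Real.sin (2 * Real.pi / 5) = 0) :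
    A = 0 ∧ B = 0 := by
  have hs2 : Real.sin (2 * Real.pi / 5) = 2 * Real.sin (Real.pi / 5) * Real.cos (Real.pi / 5) := by
    rw [show 2 * Real.pi / 5 = 2 * (Real.pi / 5) by ring, Real.sin_two_mul]
  have hc : Real.cos (Real.pi / 5) = (1 + Real.sqrt 5) / 4 := Real.cos_pi_div_five
  have hs1pos : 0 < Real.sin (Real.pi / 5) := by
    apply Real.sin_pos_of_pos_of_lt_pi
    · positivity
    · nlinarith [Real.pi_pos]
  rw [hs2, hc] at h
  have key : (2 * A + B : ℝ) + B * Real.sqrt 5 = 0 := by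
    have h' : Real.sin (Real.pi / 5) * ((A : ℝ) + B * ((1 + Real.sqrt 5) / 2)) = 0 := by
      ring_nf at h ⊢; linarith [h]
    have := (mul_eq_zero.mp h').resolve_left (ne_of_gt hs1pos)
    linarith
  have hB : B = 0 := by
    by_contra hB
    have hirr : Irrational (Real.sqrt 5) :=
      Nat.Prime.irrational_sqrt (by norm_num)
    have : Real.sqrt 5 = ((-(2 * A + B) / B : ℚ) : ℝ) := by
      have hBr : (B : ℝ) ≠ 0 := Int.cast_ne_zero.mpr hB
      push_cast
      field_simp
      linarith [key]
    exact hirr ⟨-(2 * A + B) / B, this.symm⟩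
  have hAr : (A : ℝ) = 0 := by
    rw [hB] at key; push_cast at key; linarith
  exact ⟨by exact_mod_cast hAr, hB⟩

/-- single unit vector -/
def u (a : Fin 10) : Fin 10 → ℕ := fun j => if j = a then 1 else 0

/-- two-index witness -/
def w (a b : Fin 10) : Fin 10 → ℕ := fun j => (if j = a then 1 else 0) + (if j = b then 1 else 0)

lemma u_le (n : Fin 10 → ℕ) (a : Fin 10) (ha : 0 < n a) : ∀ j, u a j ≤ n j := by
  intro j; unfold u
  by_cases h : j = a
  · subst h; simp; exact ha
  · simp [h]

lemma u_sum (a : Fin 10) : ∑ j, u a j = 1 := by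
  unfold u; rw [Finset.sum_ite_eq']; simp

lemma w_le (n : Fin 10 → ℕ) (a b : Fin 10) (ha : 0 < n a) (hb : 0 < n b) (hab : a ≠ b) :
    ∀ j, w a b j ≤ n j := by
  intro j; unfold w
  by_cases h1 : j = a
  · subst h1; simp [hab]; omega
  · by_cases h2 : j = b
    · subst h2; simp [h1]; omega
    · simp [h1, h2]

lemma w_sum (a b : Fin 10) : ∑ j, w a b j = 2 := by
  unfold w
  rw [Finset.sum_add_distrib, Finset.sum_ite_eq', Finset.sum_ite_eq']; simp

/-- Theorem 6.6: every real combination of at least three 10th roots of unity is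
reducible, i.e. admits a proper nonempty subcombination with real sum. -/
theorem no_nontrivial_combination (n : Fin 10 → ℕ)
    (hlevel : 3 ≤ ∑ j, n j)
    (hreal : (∑ j, (n j : ℂ) * xi ^ (j : ℕ)).im = 0) :
    ∃ m : Fin 10 → ℕ, (∀ j, m j ≤ n j) ∧ 0 < ∑ j, m j ∧ (∑ j, m j) < (∑ j, n j) ∧
      (∑ j, (m j : ℂ) * xi ^ (j : ℕ)).im = 0 := by
  rw [im_eq] at hreal
  have hAB : ((n 1 : ℤ) + n 4 - n 6 - n 9) = 0 ∧ ((n 2 : ℤ) + n 3 - n 7 - n 8) = 0 := by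
    apply lin_indep
    push_cast
    convert hreal using 2
  obtain ⟨hA, hB⟩ := hAB
  have hA' : n 1 + n 4 = n 6 + n 9 := by omega
  have hB' : n 2 + n 3 = n 7 + n 8 := by omega
  have htot : ∑ j, n j = n 0 + n 1 + n 2 + n 3 + n 4 + n 5 + n 6 + n 7 + n 8 + n 9 := by
    rw [sum_univ_ten']
  by_cases h0 : 0 < n 0
  · exact ⟨u 0, u_le n 0 h0, by rw [u_sum]; norm_num, by rw [u_sum]; omega,
      by rw [im_eq]; simp (config := { decide := true }) [u]⟩
  by_cases h5 : 0 < n 5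
  · exact ⟨u 5, u_le n 5 h5, by rw [u_sum]; norm_num, by rw [u_sum]; omega,
      by rw [im_eq]; simp (config := { decide := true }) [u]⟩
  have htot4 : 4 ≤ ∑ j, n j := by omega
  by_cases ha : 0 < n 1 + n 4
  · have h69 : 0 < n 6 + n 9 := by omega
    by_cases h1 : 0 < n 1
    · by_cases h6 : 0 < n 6
      · exact ⟨w 1 6, w_le n 1 6 h1 h6 (by decide), by rw [w_sum]; norm_num, by rw [w_sum]; omega,
          (by rw [im_eq]; simp (config := { decide := true }) [w])⟩
      · have h9 : 0 < n 9 := by omega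
        exact ⟨w 1 9, w_le n 1 9 h1 h9 (by decide), by rw [w_sum]; norm_num, by rw [w_sum]; omega,
          (by rw [im_eq]; simp (config := { decide := true }) [w])⟩
    · have h4 : 0 < n 4 := by omega
      by_cases h6 : 0 < n 6
      · exact ⟨w 4 6, w_le n 4 6 h4 h6 (by decide), by rw [w_sum]; norm_num, by rw [w_sum]; omega,
          (by rw [im_eq]; simp (config := { decide := true }) [w])⟩
      · have h9 : 0 < n 9 := by omega
        exact ⟨w 4 9, w_le n 4 9 h4 h9 (by decide), by rw [w_sum]; norm_num, by rw [w_sum]; omega,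
          (by rw [im_eq]; simp (config := { decide := true }) [w])⟩
  · have hb : 0 < n 2 + n 3 := by omega
    have h78 : 0 < n 7 + n 8 := by omega
    by_cases h2 : 0 < n 2
    · by_cases h7 : 0 < n 7
      · exact ⟨w 2 7, w_le n 2 7 h2 h7 (by decide), by rw [w_sum]; norm_num, by rw [w_sum]; omega,
          (by rw [im_eq]; simp (config := { decide := true }) [w])⟩
      · have h8 : 0 < n 8 := by omega
        exact ⟨w 2 8, w_le n 2 8 h2 h8 (by decide), by rw [w_sum]; norm_num, by rw [w_sum]; omega,
          (by rw [im_eq]; simp (config := { decide := true }) [w])⟩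
    · have h3 : 0 < n 3 := by omega
      by_cases h7 : 0 < n 7
      · exact ⟨w 3 7, w_le n 3 7 h3 h7 (by decide), by rw [w_sum]; norm_num, by rw [w_sum]; omega,
          (by rw [im_eq]; simp (config := { decide := true }) [w])⟩
      · have h8 : 0 < n 8 := by omega
        exact ⟨w 3 8, w_le n 3 8 h3 h8 (by decide), by rw [w_sum]; norm_num, by rw [w_sum]; omega,
          (by rw [im_eq]; simp (config := { decide := true }) [w])⟩
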